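/- arXiv:2007.11152 — 2 statements merged into one kernel-verified Lean document; each statement's English description precedes it below -/
import Mathlib

section
/- Let ℓ: ℝ → ℝ be differentiable with ℓ'(u) < 0 for all u and ℓ' nondecreasing. For probabilities p_1 > p_2 ≥ 0 and the two-class risk R(f) = p_1·ℓ(f) + p_2·ℓ(−f) over f ∈ ℝ: every minimizer f* of R (when it exists), and more generally any f at which R is minimized over a bounded interval [−M, M], satisfies f* > 0. In particular sign(f*) agrees with the Bayes rule argmax of class probability. -/
/-- Fisher-consistency-type result for a two-class surrogate risk.
If ℓ is differentiable with ℓ' < 0 everywhere and ℓ' nondecreasing and p₁ > p₂ ≥ 0, then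
any minimizer of R(f) = p₁ℓ(f) + p₂ℓ(−f) over [−M, M] is strictly positive. -/
theorem stmt16 (ℓ : ℝ → ℝ) (hdiff : Differentiable ℝ ℓ)
    (hneg : ∀ u : ℝ, deriv ℓ u < 0) (hmono : Monotone (deriv ℓ))
    (p₁ p₂ : ℝ) (hp₂ : 0 ≤ p₂) (hp : p₂ < p₁) (hsum : p₁ + p₂ ≤ 1)
    (M : ℝ) (hM : 0 < M)
    (f : ℝ) (hf : f ∈ Set.Icc (-M) M)
    (hmin : ∀ g ∈ Set.Icc (-M) M, p₁ * ℓ f + p₂ * ℓ (-f) ≤ p₁ * ℓ g + p₂ * ℓ (-g)) :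
    0 < f := by
  by_contra hle
  push_neg at hle
  set R : ℝ → ℝ := fun x => p₁ * ℓ x + p₂ * ℓ (-x) with hR
  have hRd : ∀ x : ℝ, HasDerivAt R (p₁ * deriv ℓ x - p₂ * deriv ℓ (-x)) x := by
    intro x
    have h1 : HasDerivAt ℓ (deriv ℓ x) x := (hdiff x).hasDerivAt
    have h2 : HasDerivAt (fun y : ℝ => ℓ (-y)) (deriv ℓ (-x) * (-1)) x :=
      ((hdiff (-x)).hasDerivAt).comp x (hasDerivAt_neg x)
    have := (h1.const_mul p₁).add (h2.const_mul p₂)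
    exact this.congr_deriv (by ring)
  have key : ∀ x : ℝ, x ≤ 0 → p₁ * deriv ℓ x - p₂ * deriv ℓ (-x) < 0 := by
    intro x hx
    have h1 : deriv ℓ x ≤ deriv ℓ (-x) := hmono (by linarith)
    have h2 : deriv ℓ x < 0 := hneg x
    nlinarith
  rcases lt_or_eq_of_le hle with hlt | heq
  · -- f < 0 : mean value theorem on [f, 0]
    have hcont : ContinuousOn R (Set.Icc f 0) := fun x _ => (hRd x).continuousAt.continuousWithinAt
    obtain ⟨c, hc, hceq⟩ := exists_hasDerivAt_eq_slope R
      (fun x => p₁ * deriv ℓ x - p₂ * deriv ℓ (-x)) hlt hcont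
      (fun x _ => hRd x)
    have hc0 : c < 0 := hc.2
    have hder : p₁ * deriv ℓ c - p₂ * deriv ℓ (-c) < 0 := key c (le_of_lt hc0)
    have hslope : (R 0 - R f) / (0 - f) < 0 := by rw [← hceq]; exact hder
    have hpos : 0 < 0 - f := by linarith
    have : R 0 - R f < 0 := by
      have := (div_neg_iff).mp hslope
      rcases this with ⟨h1, h2⟩ | ⟨h1, h2⟩
      · linarith
      · exact h1
    have hmin0 := hmin 0 ⟨by linarith, by linarith⟩
    simp only [hR, neg_zero] at this hmin0
    linarith
  · -- f = 0 : local minimum, derivative zero, contradiction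
    have hnhds : Set.Icc (-M) M ∈ nhds (0 : ℝ) := Icc_mem_nhds (by linarith) hM
    have hloc : IsLocalMin R 0 := by
      filter_upwards [hnhds] with g hg
      have := hmin g hg
      simp only [hR, heq] at this ⊢
      exact this
    have := hloc.hasDerivAt_eq_zero (hRd 0)
    have hk := key 0 le_rfl
    rw [neg_zero] at this hk
    linarith
end

section
/- With ω_i = ω_1·δ^{1−i} (δ² ≥ 2√2+2) and ψ-values satisfying ω_{t} < ψ ≤ 2ω_{t}, the hierarchical property (H.S.1) holds for the dissimilarity in equation (4) in the following concrete case: for any layers with LLCA indices t̃ < t̃', and any node pairs at layers (m, l) and (m', l') respectively with t̃ < min(m,l), t̃' < min(m',l'), one has ψ_{t̃}² + ∑_{i=t̃+1}^{m−1}ω_i² + ∑_{i=t̃+1}^{l−1}ω_i² > ψ_{t̃'}² + ∑_{i=t̃'+1}^{m'−1}ω_i² + ∑_{i=t̃'+1}^{l'−1}ω_i², i.e., the squared dissimilarity with a smaller LLCA layer is strictly larger. -/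
open scoped BigOperators

lemma geomIcc_le (r : ℝ) (hr0 : 0 ≤ r) (hr1 : r < 1) (a b : ℕ) (ha : 1 ≤ a) :
    ∑ i ∈ Finset.Icc a b, r ^ (i - 1) ≤ r ^ (a - 1) / (1 - r) := by
  have h1r : 0 < 1 - r := by linarith
  rcases lt_or_ge b a with h | h
  · rw [Finset.Icc_eq_empty (by omega)]
    simp
    positivity
  · have key : ∀ c, a ≤ c → ∑ i ∈ Finset.Icc a c, r ^ (i - 1)
        = (r ^ (a - 1) - r ^ c) / (1 - r) := by
      intro c hc
      induction c, hc using Nat.le_induction with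
      | base =>
        rw [Finset.Icc_self, Finset.sum_singleton]
        have h2 : r ^ a = r ^ (a - 1) * r := by
          rw [← pow_succ]; congr 1; omega
        field_simp [h2]
        rw [h2]
        ring
      | succ n hn ih =>
        rw [Finset.sum_Icc_succ_top (by omega), ih]
        have h2 : r ^ (n + 1) = r ^ n * r := pow_succ r n
        have h3 : n + 1 - 1 = n := by omega
        rw [h3, h2]
        field_simp
        ring
    rw [key b h]
    have hb : 0 ≤ r ^ b := pow_nonneg hr0 b
    apply div_le_div_of_nonneg_right ?_ h1r.le
    linarith

/-- hierarchical property (H.S.1), concrete case. With ω_i = ω₁·δ^{1−i},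
δ² ≥ 2√2 + 2, and ω_t < ψ_t ≤ 2·ω_t for every layer t, a pair of nodes whose LLCA is at a
strictly smaller layer t̃ < t̃' has strictly larger squared dissimilarity:
ψ_{t̃}² + ∑_{i=t̃+1}^{m−1} ω_i² + ∑_{i=t̃+1}^{l−1} ω_i²
  > ψ_{t̃'}² + ∑_{i=t̃'+1}^{m'−1} ω_i² + ∑_{i=t̃'+1}^{l'−1} ω_i². -/
theorem stmt19 (k : ℕ) (ω₁ δ : ℝ) (hω₁ : 0 < ω₁) (hδ : 1 < δ)
    (hδ2 : 2 * Real.sqrt 2 + 2 ≤ δ ^ 2)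
    (ω : ℕ → ℝ) (hω : ∀ i : ℕ, ω i = ω₁ / δ ^ (i - 1))
    (ψ : ℕ → ℝ) (hψ : ∀ t : ℕ, ω t < ψ t ∧ ψ t ≤ 2 * ω t)
    (t t' m l m' l' : ℕ)
    (ht : 1 ≤ t) (htt' : t < t')
    (hm : t < min m l) (hm' : t' < min m' l')
    (hk : m ≤ k ∧ l ≤ k ∧ m' ≤ k ∧ l' ≤ k) :
    ψ t' ^ 2 + ∑ i ∈ Finset.Icc (t' + 1) (m' - 1), ω i ^ 2 +
        ∑ i ∈ Finset.Icc (t' + 1) (l' - 1), ω i ^ 2 <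
      ψ t ^ 2 + ∑ i ∈ Finset.Icc (t + 1) (m - 1), ω i ^ 2 +
        ∑ i ∈ Finset.Icc (t + 1) (l - 1), ω i ^ 2 := by
  have hδ0 : (0:ℝ) < δ := lt_trans one_pos hδ
  have hδ2pos : (1:ℝ) < δ ^ 2 := one_lt_pow₀ hδ (by norm_num)
  set r : ℝ := (δ ^ 2)⁻¹ with hrdef
  have hr0 : 0 < r := by positivity
  have hr1 : r < 1 := inv_lt_one_of_one_lt₀ hδ2pos
  have h1r : 0 < 1 - r := by linarith
  -- ω i ^ 2 in terms of r
  have hω2 : ∀ i, ω i ^ 2 = ω₁ ^ 2 * r ^ (i - 1) := by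
    intro i
    rw [hω i, div_pow, hrdef, inv_pow, ← pow_mul, ← pow_mul, Nat.mul_comm]
    rw [div_eq_mul_inv]
  have hωpos : ∀ i, 0 < ω i := by
    intro i; rw [hω]; positivity
  have hψpos : ∀ i, 0 < ψ i := fun i => lt_trans (hωpos i) (hψ i).1
  -- sums on the right are nonnegative
  have hS1 : 0 ≤ ∑ i ∈ Finset.Icc (t + 1) (m - 1), ω i ^ 2 :=
    Finset.sum_nonneg fun i _ => sq_nonneg _
  have hS2 : 0 ≤ ∑ i ∈ Finset.Icc (t + 1) (l - 1), ω i ^ 2 :=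
    Finset.sum_nonneg fun i _ => sq_nonneg _
  -- bound the left sums
  have hsum : ∀ b, ∑ i ∈ Finset.Icc (t' + 1) b, ω i ^ 2
      ≤ ω₁ ^ 2 * (r ^ (t + 1) / (1 - r)) := by
    intro b
    calc ∑ i ∈ Finset.Icc (t' + 1) b, ω i ^ 2
        = ω₁ ^ 2 * ∑ i ∈ Finset.Icc (t' + 1) b, r ^ (i - 1) := by
          rw [Finset.mul_sum]; exact Finset.sum_congr rfl fun i _ => hω2 i
      _ ≤ ω₁ ^ 2 * (r ^ (t' + 1 - 1) / (1 - r)) := by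
          apply mul_le_mul_of_nonneg_left (geomIcc_le r hr0.le hr1 _ _ (by omega))
            (sq_nonneg _)
      _ ≤ ω₁ ^ 2 * (r ^ (t + 1) / (1 - r)) := by
          apply mul_le_mul_of_nonneg_left _ (sq_nonneg _)
          apply div_le_div_of_nonneg_right _ h1r.le
          exact pow_le_pow_of_le_one hr0.le hr1.le (by omega)
  -- bound ψ t' ^ 2
  have hψ' : ψ t' ^ 2 ≤ 4 * (ω₁ ^ 2 * r ^ t) := by
    have h1 : ψ t' ^ 2 ≤ (2 * ω t') ^ 2 :=
      pow_le_pow_left₀ (hψpos t').le (hψ t').2 2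
    have h2 : ω t' ^ 2 ≤ ω₁ ^ 2 * r ^ t := by
      rw [hω2]
      exact mul_le_mul_of_nonneg_left
        (pow_le_pow_of_le_one hr0.le hr1.le (by omega)) (sq_nonneg _)
    calc ψ t' ^ 2 ≤ (2 * ω t') ^ 2 := h1
      _ = 4 * ω t' ^ 2 := by ring
      _ ≤ 4 * (ω₁ ^ 2 * r ^ t) := by linarith
  -- key scalar inequality
  have hs2 : Real.sqrt 2 ^ 2 = 2 := Real.sq_sqrt (by norm_num)
  have hs1 : (1:ℝ) ≤ Real.sqrt 2 := by nlinarith [Real.sqrt_nonneg 2]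
  have hrδ : r * δ ^ 2 = 1 := inv_mul_cancel₀ (by positivity)
  have hkey : 4 * r + 2 * (r ^ 2 / (1 - r)) ≤ 1 := by
    have h1 : r * (2 * Real.sqrt 2 + 2) ≤ 1 := by
      calc r * (2 * Real.sqrt 2 + 2) ≤ r * δ ^ 2 := by
            apply mul_le_mul_of_nonneg_left hδ2 hr0.le
        _ = 1 := hrδ
    rw [show 4 * r + 2 * (r ^ 2 / (1 - r)) = (4 * r * (1 - r) + 2 * r ^ 2) / (1 - r) by
      field_simp]
    rw [div_le_one h1r]
    nlinarith [sq_nonneg (Real.sqrt 2 - 1), sq_nonneg (r * (2 * Real.sqrt 2 + 2) - 1),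
      mul_nonneg hr0.le (sub_nonneg.2 h1), mul_pos hr0 hr0]
  -- main bound: LHS ≤ ω₁^2 * r^(t-1) = ω t ^2 < ψ t ^2
  have hpow : r ^ t = r * r ^ (t - 1) := by
    rw [← pow_succ']; congr 1; omega
  have hpow2 : r ^ (t + 1) = r ^ 2 * r ^ (t - 1) := by
    rw [← pow_add]; congr 1; omega
  have hpt : 0 < r ^ (t - 1) := pow_pos hr0 _
  have hmain : 4 * (ω₁ ^ 2 * r ^ t) + 2 * (ω₁ ^ 2 * (r ^ (t + 1) / (1 - r)))
      ≤ ω₁ ^ 2 * r ^ (t - 1) := by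
    have := mul_le_mul_of_nonneg_left hkey (le_of_lt (mul_pos (by positivity : (0:ℝ) < ω₁ ^ 2) hpt))
    calc 4 * (ω₁ ^ 2 * r ^ t) + 2 * (ω₁ ^ 2 * (r ^ (t + 1) / (1 - r)))
        = (ω₁ ^ 2 * r ^ (t - 1)) * (4 * r + 2 * (r ^ 2 / (1 - r))) := by
          rw [hpow, hpow2]; ring
      _ ≤ (ω₁ ^ 2 * r ^ (t - 1)) * 1 := by
          apply mul_le_mul_of_nonneg_left hkey (by positivity)
      _ = ω₁ ^ 2 * r ^ (t - 1) := by ring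
  have hωψ : ω₁ ^ 2 * r ^ (t - 1) < ψ t ^ 2 := by
    rw [← hω2]
    exact pow_lt_pow_left₀ (hψ t).1 (hωpos t).le (by norm_num)
  calc ψ t' ^ 2 + ∑ i ∈ Finset.Icc (t' + 1) (m' - 1), ω i ^ 2 +
        ∑ i ∈ Finset.Icc (t' + 1) (l' - 1), ω i ^ 2
      ≤ 4 * (ω₁ ^ 2 * r ^ t) + 2 * (ω₁ ^ 2 * (r ^ (t + 1) / (1 - r))) := by
        have := hsum (m' - 1); have := hsum (l' - 1); linarith
    _ ≤ ω₁ ^ 2 * r ^ (t - 1) := hmain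
    _ < ψ t ^ 2 := hωψ
    _ ≤ ψ t ^ 2 + ∑ i ∈ Finset.Icc (t + 1) (m - 1), ω i ^ 2 +
        ∑ i ∈ Finset.Icc (t + 1) (l - 1), ω i ^ 2 := by linarith
end
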